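/- arXiv:2401.01231 — 3 statements merged into one kernel-verified Lean document; each statement's English description precedes it below -/
import Mathlib

section
/- One missing data point case (Proposition 1 with L = 1): if f_Θ(s_{n+1} | s_{1:n}) = Σ_{i=1}^n w_θ(i, n+1) κ₂(s_{n+1} − sᵢ, h̲) and the location s_{u₁} (with 1 < u₁ ≤ n) is unobserved, then the marginal density obtained by integrating out s_{u₁}, namely ∫ f_Θ(s | s_{1:n}) · f_Θ(s_{u₁} | s_{1:(u₁−1)}) ds_{u₁}, equals Σ_{i ∈ (1:n)\{u₁}} w_θ(i, n+1) κ₂(s − sᵢ, h̲) + w_θ(u₁, n+1) · Σ_{j=1}^{u₁−1} w_θ(j, u₁) κ₂(s − s_j, √2·h̲). -/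
open MeasureTheory Real

/-- Univariate centered Gaussian density with standard deviation `σ`. -/
noncomputable def gauss1 (σ x : ℝ) : ℝ :=
  (1 / (Real.sqrt (2 * Real.pi) * σ)) * Real.exp (-(x ^ 2) / (2 * σ ^ 2))

/-- Bivariate product Gaussian kernel `κ₂(z, h)`. -/
noncomputable def kernel2 (z h : ℝ × ℝ) : ℝ := gauss1 h.1 z.1 * gauss1 h.2 z.2

lemma gauss1_nonneg (σ x : ℝ) (hσ : 0 < σ) : 0 ≤ gauss1 σ x := by
  unfold gauss1; positivity

lemma integrable_gauss1 (σ : ℝ) (hσ : 0 < σ) : Integrable (fun x => gauss1 σ x) := by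
  unfold gauss1
  apply Integrable.const_mul
  have h := integrable_exp_neg_mul_sq (b := 1/(2*σ^2)) (by positivity)
  convert h using 2 with x
  ring

lemma integrable_gauss1_sub (σ : ℝ) (hσ : 0 < σ) (c : ℝ) :
    Integrable (fun x => gauss1 σ (x - c)) :=
  (integrable_gauss1 σ hσ).comp_sub_right c

lemma gauss1_sub_comm (σ a b : ℝ) : gauss1 σ (a - b) = gauss1 σ (b - a) := by
  unfold gauss1; ring_nf

lemma integral_gauss1 (σ : ℝ) (hσ : 0 < σ) (c : ℝ) :
    ∫ x, gauss1 σ (x - c) = 1 := by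
  rw [integral_sub_right_eq_self (fun x => gauss1 σ x) c]
  unfold gauss1
  rw [integral_const_mul]
  have : ∀ x : ℝ, Real.exp (-(x^2)/(2*σ^2)) = Real.exp (-(1/(2*σ^2)) * x^2) := by
    intro x; congr 1; ring
  simp only [this, integral_gaussian]
  have h1 : π / (1/(2*σ^2)) = 2 * π * σ^2 := by field_simp
  have h3 : Real.sqrt (2*π*σ^2) = Real.sqrt 2 * Real.sqrt π * σ := by
    rw [Real.sqrt_mul (by positivity : (0:ℝ) ≤ 2*π) (σ^2), Real.sqrt_sq hσ.le,
      Real.sqrt_mul (by norm_num : (0:ℝ) ≤ 2) π]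
  rw [h1, h3, Real.sqrt_mul (by norm_num : (0:ℝ) ≤ 2) π]
  have h2 : (0:ℝ) < Real.sqrt 2 := by positivity
  have h4 : (0:ℝ) < Real.sqrt π := Real.sqrt_pos.mpr pi_pos
  field_simp

lemma gauss1_mul_eq (σ a b : ℝ) (hσ : 0 < σ) (z : ℝ) :
    gauss1 σ (a - z) * gauss1 σ (z - b)
      = ((1 / (Real.sqrt (2 * Real.pi) * σ))^2
          * Real.exp (-((a-b)^2) / (2 * (Real.sqrt 2 * σ)^2)))
        * Real.exp (-(1/σ^2) * (z - (a+b)/2)^2) := by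
  have h2 : (Real.sqrt 2 * σ)^2 = 2 * σ^2 := by
    rw [mul_pow, Real.sq_sqrt (by norm_num : (0:ℝ) ≤ 2)]
  unfold gauss1
  rw [h2]
  have hexp : -((a - z) ^ 2) / (2 * σ ^ 2) + -((z - b) ^ 2) / (2 * σ ^ 2)
      = -((a-b)^2) / (2 * (2 * σ^2)) + -(1/σ^2) * (z - (a+b)/2)^2 := by
    field_simp
    ring
  rw [show (1 / (Real.sqrt (2 * Real.pi) * σ)) * Real.exp (-((a - z) ^ 2) / (2 * σ ^ 2)) *
      ((1 / (Real.sqrt (2 * Real.pi) * σ)) * Real.exp (-((z - b) ^ 2) / (2 * σ ^ 2)))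
      = (1 / (Real.sqrt (2 * Real.pi) * σ))^2 *
        (Real.exp (-((a - z) ^ 2) / (2 * σ ^ 2)) * Real.exp (-((z - b) ^ 2) / (2 * σ ^ 2))) by ring,
    ← Real.exp_add, hexp, Real.exp_add]
  ring

lemma integrable_gauss1_mul (σ a b : ℝ) (hσ : 0 < σ) :
    Integrable (fun z => gauss1 σ (a - z) * gauss1 σ (z - b)) := by
  simp only [fun z => gauss1_mul_eq σ a b hσ z]
  apply Integrable.const_mul
  have h := integrable_exp_neg_mul_sq (b := 1/σ^2) (by positivity)
  exact h.comp_sub_right ((a+b)/2)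

lemma conv_gauss1 (σ a b : ℝ) (hσ : 0 < σ) :
    ∫ z, gauss1 σ (a - z) * gauss1 σ (z - b) = gauss1 (Real.sqrt 2 * σ) (a - b) := by
  simp only [fun z => gauss1_mul_eq σ a b hσ z]
  rw [integral_const_mul,
    integral_sub_right_eq_self (fun z => Real.exp (-(1/σ^2) * z^2)) ((a+b)/2),
    integral_gaussian]
  have h1 : π / (1/σ^2) = π * σ^2 := by field_simp
  have h3 : Real.sqrt (π * σ^2) = Real.sqrt π * σ := by
    rw [Real.sqrt_mul pi_pos.le, Real.sqrt_sq hσ.le]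
  rw [h1, h3]
  unfold gauss1
  rw [Real.sqrt_mul (by norm_num : (0:ℝ) ≤ 2) π]
  have h2 : (0:ℝ) < Real.sqrt 2 := by positivity
  have h4 : (0:ℝ) < Real.sqrt π := Real.sqrt_pos.mpr pi_pos
  have h5 : Real.sqrt π * Real.sqrt π = π := Real.mul_self_sqrt pi_pos.le
  have h6 : Real.sqrt 2 * Real.sqrt 2 = 2 := Real.mul_self_sqrt (by norm_num)
  field_simp

lemma integrable_kernel2_sub (h1 h2 : ℝ) (hh1 : 0 < h1) (hh2 : 0 < h2) (c : ℝ × ℝ) :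
    Integrable (fun z : ℝ × ℝ => kernel2 (z - c) (h1, h2)) := by
  have : (fun z : ℝ × ℝ => kernel2 (z - c) (h1, h2))
      = fun z : ℝ × ℝ => (fun x => gauss1 h1 (x - c.1)) z.1 * (fun y => gauss1 h2 (y - c.2)) z.2 := by
    funext z; simp [kernel2, Prod.fst_sub, Prod.snd_sub]
  rw [this, MeasureTheory.Measure.volume_eq_prod]
  exact (integrable_gauss1_sub h1 hh1 c.1).mul_prod (integrable_gauss1_sub h2 hh2 c.2)

lemma integral_kernel2_sub (h1 h2 : ℝ) (hh1 : 0 < h1) (hh2 : 0 < h2) (c : ℝ × ℝ) :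
    ∫ z : ℝ × ℝ, kernel2 (z - c) (h1, h2) = 1 := by
  have : (fun z : ℝ × ℝ => kernel2 (z - c) (h1, h2))
      = fun z : ℝ × ℝ => (fun x => gauss1 h1 (x - c.1)) z.1 * (fun y => gauss1 h2 (y - c.2)) z.2 := by
    funext z; simp [kernel2, Prod.fst_sub, Prod.snd_sub]
  rw [this, MeasureTheory.Measure.volume_eq_prod,
    integral_prod_mul (fun x => gauss1 h1 (x - c.1)) (fun y => gauss1 h2 (y - c.2)),
    integral_gauss1 h1 hh1 c.1, integral_gauss1 h2 hh2 c.2, one_mul]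

lemma integrable_kernel2_mul (h1 h2 : ℝ) (hh1 : 0 < h1) (hh2 : 0 < h2) (a c : ℝ × ℝ) :
    Integrable (fun z : ℝ × ℝ => kernel2 (a - z) (h1, h2) * kernel2 (z - c) (h1, h2)) := by
  have : (fun z : ℝ × ℝ => kernel2 (a - z) (h1, h2) * kernel2 (z - c) (h1, h2))
      = fun z : ℝ × ℝ => (fun x => gauss1 h1 (a.1 - x) * gauss1 h1 (x - c.1)) z.1
          * (fun y => gauss1 h2 (a.2 - y) * gauss1 h2 (y - c.2)) z.2 := by
    funext z; simp [kernel2, Prod.fst_sub, Prod.snd_sub]; ring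
  rw [this, MeasureTheory.Measure.volume_eq_prod]
  exact (integrable_gauss1_mul h1 a.1 c.1 hh1).mul_prod (integrable_gauss1_mul h2 a.2 c.2 hh2)

lemma conv_kernel2 (h1 h2 : ℝ) (hh1 : 0 < h1) (hh2 : 0 < h2) (a c : ℝ × ℝ) :
    ∫ z : ℝ × ℝ, kernel2 (a - z) (h1, h2) * kernel2 (z - c) (h1, h2)
      = kernel2 (a - c) (Real.sqrt 2 * h1, Real.sqrt 2 * h2) := by
  have : (fun z : ℝ × ℝ => kernel2 (a - z) (h1, h2) * kernel2 (z - c) (h1, h2))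
      = fun z : ℝ × ℝ => (fun x => gauss1 h1 (a.1 - x) * gauss1 h1 (x - c.1)) z.1
          * (fun y => gauss1 h2 (a.2 - y) * gauss1 h2 (y - c.2)) z.2 := by
    funext z; simp [kernel2, Prod.fst_sub, Prod.snd_sub]; ring
  rw [this, MeasureTheory.Measure.volume_eq_prod,
    integral_prod_mul (fun x => gauss1 h1 (a.1 - x) * gauss1 h1 (x - c.1))
      (fun y => gauss1 h2 (a.2 - y) * gauss1 h2 (y - c.2)),
    conv_gauss1 h1 a.1 c.1 hh1, conv_gauss1 h2 a.2 c.2 hh2]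
  simp [kernel2, Prod.fst_sub, Prod.snd_sub]


/-- Proposition 1 with one missing data point (`L = 1`): integrating out the unobserved
location `s_{u₁}` (with `1 < u₁ ≤ n`) from
`f_Θ(s | s_{1:n}) · f_Θ(s_{u₁} | s_{1:(u₁−1)})` yields
`Σ_{i ∈ (1:n)\{u₁}} w_θ(i,n+1) κ₂(s − sᵢ, h̲)
  + w_θ(u₁,n+1) Σ_{j=1}^{u₁−1} w_θ(j,u₁) κ₂(s − s_j, √2·h̲)`. -/
theorem one_missing_point (n u₁ : ℕ) (hu₁ : 1 < u₁) (hun : u₁ ≤ n)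
    (w : ℕ → ℕ → ℝ) (hw : ∀ i m, 0 ≤ w i m)
    (hnorm : ∀ m, 2 ≤ m → ∑ j ∈ Finset.Icc 1 (m - 1), w j m = 1)
    (σ : ℕ → ℝ × ℝ) (h δlon δlat : ℝ)
    (hh : 0 < h) (hδlon : 0 < δlon) (hδlat : 0 < δlat) (s : ℝ × ℝ) :
    (∫ z : ℝ × ℝ,
        (∑ i ∈ Finset.Icc 1 n,
            w i (n + 1) * kernel2 (s - (if i = u₁ then z else σ i)) (h * δlon, h * δlat)) *
          (∑ j ∈ Finset.Icc 1 (u₁ - 1), w j u₁ * kernel2 (z - σ j) (h * δlon, h * δlat)))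
      = (∑ i ∈ (Finset.Icc 1 n).erase u₁,
            w i (n + 1) * kernel2 (s - σ i) (h * δlon, h * δlat)) +
          w u₁ (n + 1) *
            ∑ j ∈ Finset.Icc 1 (u₁ - 1),
              w j u₁ *
                kernel2 (s - σ j) (Real.sqrt 2 * (h * δlon), Real.sqrt 2 * (h * δlat)) := by
  set h1 : ℝ := h * δlon with hh1def
  set h2 : ℝ := h * δlat with hh2def
  have hp1 : 0 < h1 := mul_pos hh hδlon
  have hp2 : 0 < h2 := mul_pos hh hδlat
  -- the integrand as a double sum
  have hexp : ∀ z : ℝ × ℝ,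
      (∑ i ∈ Finset.Icc 1 n,
          w i (n + 1) * kernel2 (s - (if i = u₁ then z else σ i)) (h1, h2)) *
        (∑ j ∈ Finset.Icc 1 (u₁ - 1), w j u₁ * kernel2 (z - σ j) (h1, h2))
      = ∑ i ∈ Finset.Icc 1 n, ∑ j ∈ Finset.Icc 1 (u₁ - 1),
          w i (n + 1) * kernel2 (s - (if i = u₁ then z else σ i)) (h1, h2) *
            (w j u₁ * kernel2 (z - σ j) (h1, h2)) := fun z =>
    Finset.sum_mul_sum _ _ _ _
  -- integrability of each summand
  have hInt : ∀ i j : ℕ, Integrable (fun z : ℝ × ℝ =>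
      w i (n + 1) * kernel2 (s - (if i = u₁ then z else σ i)) (h1, h2) *
        (w j u₁ * kernel2 (z - σ j) (h1, h2))) := by
    intro i j
    by_cases hi : i = u₁
    · rw [hi]
      simp only [eq_self_iff_true, if_true]
      exact (((integrable_kernel2_mul h1 h2 hp1 hp2 s (σ j)).const_mul
        (w u₁ (n+1) * w j u₁)).congr (ae_of_all _ fun z => by ring))
    · simp only [if_neg hi]
      exact (((integrable_kernel2_sub h1 h2 hp1 hp2 (σ j)).const_mul
        (w i (n+1) * kernel2 (s - σ i) (h1, h2) * w j u₁)).congr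
        (ae_of_all _ fun z => by ring))
  have hmem : u₁ ∈ Finset.Icc 1 n := Finset.mem_Icc.mpr ⟨hu₁.le, hun⟩
  calc (∫ z : ℝ × ℝ,
        (∑ i ∈ Finset.Icc 1 n,
            w i (n + 1) * kernel2 (s - (if i = u₁ then z else σ i)) (h1, h2)) *
          (∑ j ∈ Finset.Icc 1 (u₁ - 1), w j u₁ * kernel2 (z - σ j) (h1, h2)))
      = ∑ i ∈ Finset.Icc 1 n, ∑ j ∈ Finset.Icc 1 (u₁ - 1),
          ∫ z : ℝ × ℝ, w i (n + 1) * kernel2 (s - (if i = u₁ then z else σ i)) (h1, h2) *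
            (w j u₁ * kernel2 (z - σ j) (h1, h2)) := by
        simp only [hexp]
        rw [integral_finset_sum _ (fun i _ => integrable_finset_sum _ (fun j _ => hInt i j))]
        exact Finset.sum_congr rfl fun i _ =>
          integral_finset_sum _ (fun j _ => hInt i j)
    _ = ∑ i ∈ Finset.Icc 1 n,
          (if i = u₁ then
            w u₁ (n + 1) * ∑ j ∈ Finset.Icc 1 (u₁ - 1),
              w j u₁ * kernel2 (s - σ j) (Real.sqrt 2 * h1, Real.sqrt 2 * h2)
          else w i (n + 1) * kernel2 (s - σ i) (h1, h2)) := by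
        refine Finset.sum_congr rfl fun i _ => ?_
        by_cases hi : i = u₁
        · rw [hi]
          simp only [eq_self_iff_true, if_true]
          rw [Finset.mul_sum]
          refine Finset.sum_congr rfl fun j _ => ?_
          have : (fun z : ℝ × ℝ => w u₁ (n + 1) * kernel2 (s - z) (h1, h2) *
              (w j u₁ * kernel2 (z - σ j) (h1, h2)))
              = fun z : ℝ × ℝ => (w u₁ (n + 1) * w j u₁) *
                (kernel2 (s - z) (h1, h2) * kernel2 (z - σ j) (h1, h2)) := by
            funext z; ring
          rw [this, integral_const_mul, conv_kernel2 h1 h2 hp1 hp2 s (σ j)]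
          ring
        · simp only [if_neg hi]
          have hval : ∀ j, (∫ z : ℝ × ℝ, w i (n + 1) * kernel2 (s - σ i) (h1, h2) *
              (w j u₁ * kernel2 (z - σ j) (h1, h2)))
              = w i (n + 1) * kernel2 (s - σ i) (h1, h2) * w j u₁ := by
            intro j
            have : (fun z : ℝ × ℝ => w i (n + 1) * kernel2 (s - σ i) (h1, h2) *
                (w j u₁ * kernel2 (z - σ j) (h1, h2)))
                = fun z : ℝ × ℝ => (w i (n + 1) * kernel2 (s - σ i) (h1, h2) * w j u₁) *
                  kernel2 (z - σ j) (h1, h2) := by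
              funext z; ring
            rw [this, integral_const_mul, integral_kernel2_sub h1 h2 hp1 hp2 (σ j), mul_one]
          simp only [hval, ← Finset.sum_mul, ← Finset.mul_sum]
          rw [hnorm u₁ hu₁, mul_one]
    _ = _ := by
        rw [← Finset.sum_erase_add _ _ hmem, if_pos rfl]
        congr 1
        refine Finset.sum_congr rfl fun i hi => ?_
        rw [if_neg (Finset.ne_of_mem_erase hi)]
end

section
/- The total mass of the general closed-form likelihood is 1: under the normalization Σ_{i=1}^{m−1} w_θ(i,m) = 1 for all m, the coefficients of the kernels in Proposition 1's formula sum to 1, i.e., Σ_{i∈(1:n)\𝒮_{L+1}} w_θ(i,n+1) + Σ_{m=1}^{L} Σ_{1≤i₁<⋯<i_m≤L} w_θ(u_{i₁},u_{i₂})⋯w_θ(u_{i_m},n+1)·(Σ_{j∈(1:u_{i₁}−1)\𝒮_{i₁}} w_θ(j,u_{i₁})) = 1. -/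
open scoped Classical in
/-- Total mass of the general closed-form likelihood is 1: under the normalization
`Σ_{i=1}^{m−1} w_θ(i,m) = 1` for all `m ≥ 2`, the coefficients of the kernels in
Proposition 1's formula sum to 1, i.e.
`Σ_{i∈(1:n)\𝒮_{L+1}} w_θ(i,n+1)
 + Σ_{m=1}^{L} Σ_{1≤i₁<⋯<i_m≤L} w_θ(u_{i₁},u_{i₂})⋯w_θ(u_{i_m},n+1)
     ·(Σ_{j∈(1:u_{i₁}−1)\𝒮_{i₁}} w_θ(j,u_{i₁})) = 1`.
(Missing indices `u : Fin L → ℕ` listed increasingly; increasing `m`-tuples are encoded by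
strictly monotone `c : Fin (m'+1) → Fin L` with tuple length `m'+1 ∈ {1,…,L}`;
`𝒮_q = {u k : k < q}`.) -/
theorem total_mass_one (L n : ℕ) (u : Fin L → ℕ) (hu : StrictMono u)
    (hu1 : ∀ k, 1 < u k) (hun : ∀ k, u k ≤ n) (hn : 1 ≤ n)
    (w : ℕ → ℕ → ℝ) (hw : ∀ i m, 0 ≤ w i m)
    (hnorm : ∀ m, 2 ≤ m → ∑ i ∈ Finset.Icc 1 (m - 1), w i m = 1) :
    (∑ i ∈ (Finset.Icc 1 n).filter (fun i => ∀ k : Fin L, u k ≠ i), w i (n + 1)) +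
        ∑ m ∈ Finset.range L,
          ∑ c ∈ Finset.univ.filter (fun c : Fin (m + 1) → Fin L => StrictMono c),
            (∏ k : Fin m, w (u (c k.castSucc)) (u (c k.succ))) *
              w (u (c (Fin.last m))) (n + 1) *
              (∑ j ∈ (Finset.Icc 1 (u (c 0) - 1)).filter (fun j => ∀ k, k < c 0 → u k ≠ j),
                w j (u (c 0)))
      = 1 := by
  induction L generalizing n with
  | zero =>
      have h0 : (Finset.Icc 1 n).filter (fun i => ∀ k : Fin 0, u k ≠ i) = Finset.Icc 1 n := by
        simp
      rw [h0]
      have h1 := hnorm (n + 1) (by omega)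
      simpa using h1
  | succ L IH =>
      set U := u (Fin.last L) with hUdef
      set u' : Fin L → ℕ := fun k => u k.castSucc with hu'def
      have hu'mono : StrictMono u' := fun a b h => hu (by simpa using h)
      have hu'1 : ∀ k, 1 < u' k := fun k => hu1 _
      have hu'U : ∀ k : Fin L, u' k < U := fun k => hu (Fin.castSucc_lt_last k)
      have hU2 : 2 ≤ U := hu1 _
      have hUn : U ≤ n := hun _
      have hUsub : U - 1 + 1 = U := by omega
      have IH1 := IH n u' hu'mono hu'1 (fun k => le_trans (hu'U k).le hUn) hn
      have IH2 := IH (U - 1) u' hu'mono hu'1 (fun k => by have := hu'U k; omega) (by omega)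
      -- direct term
      have hdir : ∑ i ∈ (Finset.Icc 1 n).filter (fun i => ∀ k : Fin (L + 1), u k ≠ i), w i (n + 1)
          = (∑ i ∈ (Finset.Icc 1 n).filter (fun i => ∀ k : Fin L, u' k ≠ i), w i (n + 1))
            - w U (n + 1) := by
        have hmem : U ∈ (Finset.Icc 1 n).filter (fun i => ∀ k : Fin L, u' k ≠ i) := by
          simp only [Finset.mem_filter, Finset.mem_Icc]
          exact ⟨⟨by omega, hUn⟩, fun k => (hu'U k).ne⟩
        rw [← Finset.sum_erase_eq_sub hmem]
        congr 1
        ext i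
        simp only [Finset.mem_erase, Finset.mem_filter, Finset.mem_Icc]
        constructor
        · rintro ⟨hicc, h⟩
          exact ⟨fun e => h (Fin.last L) e.symm, hicc, fun k => h k.castSucc⟩
        · rintro ⟨hne, hicc, h⟩
          refine ⟨hicc, fun k => ?_⟩
          by_cases hk : k = Fin.last L
          · subst hk; exact fun e => hne e.symm
          · obtain ⟨k', rfl⟩ := Fin.exists_castSucc_eq.mpr hk
            exact h k'
      -- helper: the A-sum at an index castSucc q' agrees with the u'-version
      have helperA : ∀ q' : Fin L,
          (∑ j ∈ (Finset.Icc 1 (u q'.castSucc - 1)).filter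
              (fun j => ∀ k : Fin (L + 1), k < q'.castSucc → u k ≠ j), w j (u q'.castSucc))
          = ∑ j ∈ (Finset.Icc 1 (u' q' - 1)).filter
              (fun j => ∀ k : Fin L, k < q' → u' k ≠ j), w j (u' q') := by
        intro q'
        have : u' q' = u q'.castSucc := rfl
        rw [this]
        congr 1
        ext j
        simp only [Finset.mem_filter, Finset.mem_Icc, and_congr_right_iff]
        intro _
        constructor
        · intro h k hk
          exact h k.castSucc (Fin.castSucc_lt_castSucc_iff.mpr hk)
        · intro h k hk
          have hkne : k ≠ Fin.last L := by
            intro e; subst e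
            exact absurd (hk.trans_le (Fin.le_last _)) (lt_irrefl _)
          obtain ⟨k', rfl⟩ := Fin.exists_castSucc_eq.mpr hkne
          exact h k' (Fin.castSucc_lt_castSucc_iff.mp hk)
      -- helper: A-sum at last
      have helperLast :
          (∑ j ∈ (Finset.Icc 1 (u (Fin.last L) - 1)).filter
              (fun j => ∀ k : Fin (L + 1), k < Fin.last L → u k ≠ j), w j (u (Fin.last L)))
          = ∑ j ∈ (Finset.Icc 1 (U - 1)).filter
              (fun j => ∀ k : Fin L, u' k ≠ j), w j ((U - 1) + 1) := by
        rw [hUsub, ← hUdef]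
        congr 1
        ext j
        simp only [Finset.mem_filter, Finset.mem_Icc, and_congr_right_iff]
        intro _
        constructor
        · intro h k
          exact h k.castSucc (Fin.castSucc_lt_last k)
        · intro h k hk
          obtain ⟨k', rfl⟩ := Fin.exists_castSucc_eq.mpr hk.ne
          exact h k'
      -- split every inner sum according to c (last m) = last L or not
      have hsplit : ∀ m : ℕ,
          (∑ c ∈ Finset.univ.filter (fun c : Fin (m + 1) → Fin (L + 1) => StrictMono c),
            (∏ k : Fin m, w (u (c k.castSucc)) (u (c k.succ))) *
              w (u (c (Fin.last m))) (n + 1) *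
              (∑ j ∈ (Finset.Icc 1 (u (c 0) - 1)).filter (fun j => ∀ k, k < c 0 → u k ≠ j),
                w j (u (c 0))))
          = (∑ c ∈ Finset.univ.filter
                (fun c : Fin (m + 1) → Fin (L + 1) => StrictMono c ∧ c (Fin.last m) = Fin.last L),
              (∏ k : Fin m, w (u (c k.castSucc)) (u (c k.succ))) *
                w (u (c (Fin.last m))) (n + 1) *
                (∑ j ∈ (Finset.Icc 1 (u (c 0) - 1)).filter (fun j => ∀ k, k < c 0 → u k ≠ j),
                  w j (u (c 0))))
            + (∑ c ∈ Finset.univ.filter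
                (fun c : Fin (m + 1) → Fin (L + 1) => StrictMono c ∧ c (Fin.last m) ≠ Fin.last L),
              (∏ k : Fin m, w (u (c k.castSucc)) (u (c k.succ))) *
                w (u (c (Fin.last m))) (n + 1) *
                (∑ j ∈ (Finset.Icc 1 (u (c 0) - 1)).filter (fun j => ∀ k, k < c 0 → u k ≠ j),
                  w j (u (c 0)))) := by
        intro m
        rw [← Finset.sum_filter_add_sum_filter_not
          (Finset.univ.filter (fun c : Fin (m + 1) → Fin (L + 1) => StrictMono c))
          (fun c => c (Fin.last m) = Fin.last L), Finset.filter_filter, Finset.filter_filter]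
      -- part A : sums over chains avoiding last
      have partA : ∀ m : ℕ,
          (∑ c ∈ Finset.univ.filter
              (fun c : Fin (m + 1) → Fin (L + 1) => StrictMono c ∧ c (Fin.last m) ≠ Fin.last L),
            (∏ k : Fin m, w (u (c k.castSucc)) (u (c k.succ))) *
              w (u (c (Fin.last m))) (n + 1) *
              (∑ j ∈ (Finset.Icc 1 (u (c 0) - 1)).filter (fun j => ∀ k, k < c 0 → u k ≠ j),
                w j (u (c 0))))
          = ∑ c ∈ Finset.univ.filter (fun c : Fin (m + 1) → Fin L => StrictMono c),
              (∏ k : Fin m, w (u' (c k.castSucc)) (u' (c k.succ))) *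
                w (u' (c (Fin.last m))) (n + 1) *
                (∑ j ∈ (Finset.Icc 1 (u' (c 0) - 1)).filter (fun j => ∀ k, k < c 0 → u' k ≠ j),
                  w j (u' (c 0))) := by
        intro m
        have hne : ∀ (c : Fin (m + 1) → Fin (L + 1)),
            c ∈ Finset.univ.filter
              (fun c : Fin (m + 1) → Fin (L + 1) => StrictMono c ∧ c (Fin.last m) ≠ Fin.last L) →
            ∀ k, c k ≠ Fin.last L := by
          intro c hc k
          simp only [Finset.mem_filter] at hc
          exact ((hc.2.1.monotone (Fin.le_last k)).trans_lt
            (lt_of_le_of_ne (Fin.le_last _) hc.2.2)).ne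
        refine Finset.sum_bij' (fun c hc k => (c k).castPred (hne c hc k))
          (fun c _ k => (c k).castSucc) ?_ ?_ ?_ ?_ ?_
        · intro c hc
          simp only [Finset.mem_filter, Finset.mem_univ, true_and] at hc ⊢
          intro a b hab
          have := hc.1 hab
          simp only [Fin.lt_def, Fin.coe_castPred] at *
          exact this
        · intro c hc
          simp only [Finset.mem_filter, Finset.mem_univ, true_and] at hc ⊢
          refine ⟨fun a b hab => Fin.castSucc_lt_castSucc_iff.mpr (hc hab), ?_⟩
          exact (Fin.castSucc_lt_last _).ne
        · intro c hc
          funext k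
          simp [Fin.castSucc_castPred]
        · intro c hc
          funext k
          apply Fin.ext
          simp
        · intro c hc
          have hrw : ∀ k, u' ((c k).castPred (hne c hc k)) = u (c k) := by
            intro k
            simp [hu'def, Fin.castSucc_castPred]
          simp only [hrw]
          congr 1
          congr 1
          ext j
          simp only [Finset.mem_filter, Finset.mem_Icc, and_congr_right_iff]
          intro _
          constructor
          · intro h k hk
            refine h k.castSucc ?_
            rw [Fin.lt_def] at hk ⊢
            simpa using hk
          · intro h k hk
            have hkne : k ≠ Fin.last L := by
              intro e; subst e
              have := hk.trans_le (Fin.le_last _)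
              exact absurd this (lt_irrefl _)
            obtain ⟨k', rfl⟩ := Fin.exists_castSucc_eq.mpr hkne
            refine h k' ?_
            rw [Fin.lt_def] at hk ⊢
            simpa using hk
      -- no strictly monotone map Fin (L+2) → Fin (L+1) needed as: filter empty at m = L
      have hempty : (Finset.univ.filter (fun c : Fin (L + 1) → Fin L => StrictMono c)) = ∅ := by
        rw [Finset.filter_eq_empty_iff]
        intro c _ hSM
        have := Fintype.card_le_of_injective c hSM.injective
        simp at this
      -- part B0 : chain of length 1 ending at last
      have partB0 :
          (∑ c ∈ Finset.univ.filter
              (fun c : Fin 1 → Fin (L + 1) => StrictMono c ∧ c (Fin.last 0) = Fin.last L),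
            (∏ k : Fin 0, w (u (c k.castSucc)) (u (c k.succ))) *
              w (u (c (Fin.last 0))) (n + 1) *
              (∑ j ∈ (Finset.Icc 1 (u (c 0) - 1)).filter (fun j => ∀ k, k < c 0 → u k ≠ j),
                w j (u (c 0))))
          = w U (n + 1) *
              (∑ j ∈ (Finset.Icc 1 (U - 1)).filter (fun j => ∀ k : Fin L, u' k ≠ j),
                w j ((U - 1) + 1)) := by
        have hset : (Finset.univ.filter
            (fun c : Fin 1 → Fin (L + 1) => StrictMono c ∧ c (Fin.last 0) = Fin.last L))
            = {fun _ => Fin.last L} := by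
          ext c
          simp only [Finset.mem_filter, Finset.mem_univ, true_and, Finset.mem_singleton]
          constructor
          · rintro ⟨-, h⟩
            funext k
            have : k = Fin.last 0 := Subsingleton.elim _ _
            rw [this, h]
          · rintro rfl
            exact ⟨fun a b hab => by simp [Subsingleton.elim a b] at hab, rfl⟩
        rw [hset, Finset.sum_singleton]
        simp only [Fin.prod_univ_zero, one_mul]
        rw [← helperLast, hUdef]
      -- part B : chains of length m+2 ending at last
      have partB : ∀ m : ℕ,
          (∑ c ∈ Finset.univ.filter
              (fun c : Fin (m + 2) → Fin (L + 1) =>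
                StrictMono c ∧ c (Fin.last (m + 1)) = Fin.last L),
            (∏ k : Fin (m + 1), w (u (c k.castSucc)) (u (c k.succ))) *
              w (u (c (Fin.last (m + 1)))) (n + 1) *
              (∑ j ∈ (Finset.Icc 1 (u (c 0) - 1)).filter (fun j => ∀ k, k < c 0 → u k ≠ j),
                w j (u (c 0))))
          = w U (n + 1) *
              ∑ c ∈ Finset.univ.filter (fun c : Fin (m + 1) → Fin L => StrictMono c),
                (∏ k : Fin m, w (u' (c k.castSucc)) (u' (c k.succ))) *
                  w (u' (c (Fin.last m))) ((U - 1) + 1) *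
                  (∑ j ∈ (Finset.Icc 1 (u' (c 0) - 1)).filter
                      (fun j => ∀ k, k < c 0 → u' k ≠ j),
                    w j (u' (c 0))) := by
        intro m
        rw [Finset.mul_sum]
        have hlt : ∀ (c : Fin (m + 2) → Fin (L + 1)),
            c ∈ Finset.univ.filter
              (fun c : Fin (m + 2) → Fin (L + 1) =>
                StrictMono c ∧ c (Fin.last (m + 1)) = Fin.last L) →
            ∀ k : Fin (m + 1), c k.castSucc ≠ Fin.last L := by
          intro c hc k
          simp only [Finset.mem_filter] at hc
          have : c k.castSucc < c (Fin.last (m + 1)) := hc.2.1 (Fin.castSucc_lt_last k)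
          rw [hc.2.2] at this
          exact this.ne
        refine Finset.sum_bij' (fun c hc k => (c k.castSucc).castPred (hlt c hc k))
          (fun c _ => Fin.snoc (fun k => (c k).castSucc) (Fin.last L)) ?_ ?_ ?_ ?_ ?_
        · intro c hc
          simp only [Finset.mem_filter, Finset.mem_univ, true_and] at hc ⊢
          intro a b hab
          have : c a.castSucc < c b.castSucc := hc.1 (by simpa using hab)
          simp only [Fin.lt_def, Fin.coe_castPred] at this ⊢
          exact this
        · intro c hc
          simp only [Finset.mem_filter, Finset.mem_univ, true_and] at hc ⊢
          constructor
          · intro a b hab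
            rcases eq_or_ne b (Fin.last (m + 1)) with rfl | hb
            · have ha : a ≠ Fin.last _ := hab.ne
              obtain ⟨a', rfl⟩ := Fin.exists_castSucc_eq.mpr ha
              rw [Fin.snoc_last, Fin.snoc_castSucc]
              exact Fin.castSucc_lt_last _
            · obtain ⟨b', rfl⟩ := Fin.exists_castSucc_eq.mpr hb
              have ha : a ≠ Fin.last _ := (hab.trans (Fin.castSucc_lt_last b')).ne
              obtain ⟨a', rfl⟩ := Fin.exists_castSucc_eq.mpr ha
              rw [Fin.snoc_castSucc, Fin.snoc_castSucc]
              exact Fin.castSucc_lt_castSucc_iff.mpr (hc (by simpa using hab))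
          · exact Fin.snoc_last _ _
        · intro c hc
          simp only [Finset.mem_filter] at hc
          funext k
          rcases eq_or_ne k (Fin.last (m + 1)) with rfl | hk
          · simp [Fin.snoc_last, hc.2.2]
          · obtain ⟨k', rfl⟩ := Fin.exists_castSucc_eq.mpr hk
            simp [Fin.snoc_castSucc, Fin.castSucc_castPred]
        · intro c hc
          funext k
          apply Fin.ext
          simp [Fin.snoc_castSucc]
        · intro c hc
          have hlast := (Finset.mem_filter.mp hc).2.2
          have hrw : ∀ k : Fin (m + 1),
              u' ((c k.castSucc).castPred (hlt c hc k)) = u (c k.castSucc) := by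
            intro k
            simp [hu'def, Fin.castSucc_castPred]
          simp only [hrw]
          rw [Fin.prod_univ_castSucc
            (f := fun k : Fin (m + 1) => w (u (c k.castSucc)) (u (c k.succ)))]
          rw [Fin.succ_last, hlast, ← hUdef, hUsub]
          have hprod : (∏ k : Fin m, w (u (c k.castSucc.castSucc)) (u (c k.castSucc.succ)))
              = ∏ k : Fin m, w (u (c k.castSucc.castSucc)) (u (c k.succ.castSucc)) := by
            apply Finset.prod_congr rfl
            intro k _
            rw [Fin.succ_castSucc]
          rw [hprod]
          have hA : (∑ j ∈ (Finset.Icc 1 (u (c 0) - 1)).filter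
                (fun j => ∀ k : Fin (L + 1), k < c 0 → u k ≠ j), w j (u (c 0)))
              = ∑ j ∈ (Finset.Icc 1 (u (c 0) - 1)).filter
                (fun j => ∀ k : Fin L,
                  k < (c (0 : Fin (m + 1)).castSucc).castPred (hlt c hc 0) → u' k ≠ j),
                w j (u (c 0)) := by
            congr 1
            ext j
            simp only [Finset.mem_filter, Finset.mem_Icc, and_congr_right_iff]
            intro _
            constructor
            · intro h k hk
              have hlt2 : k.castSucc < c 0 := by
                rw [Fin.lt_def] at hk ⊢
                simpa using hk
              exact h k.castSucc hlt2
            · intro h k hk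
              have hkne : k ≠ Fin.last L := by
                intro e; subst e
                exact absurd (hk.trans_le (Fin.le_last _)) (lt_irrefl _)
              obtain ⟨k', rfl⟩ := Fin.exists_castSucc_eq.mpr hkne
              refine h k' ?_
              rw [Fin.lt_def] at hk ⊢
              simpa using hk
          rw [hA]
          simp only [Fin.castSucc_zero]
          ring
      -- sum over chains avoiding last, assembled
      have hNe : (∑ m ∈ Finset.range (L + 1),
          ∑ c ∈ Finset.univ.filter
              (fun c : Fin (m + 1) → Fin (L + 1) => StrictMono c ∧ c (Fin.last m) ≠ Fin.last L),
            (∏ k : Fin m, w (u (c k.castSucc)) (u (c k.succ))) *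
              w (u (c (Fin.last m))) (n + 1) *
              (∑ j ∈ (Finset.Icc 1 (u (c 0) - 1)).filter (fun j => ∀ k, k < c 0 → u k ≠ j),
                w j (u (c 0))))
          = ∑ m ∈ Finset.range L,
              ∑ c ∈ Finset.univ.filter (fun c : Fin (m + 1) → Fin L => StrictMono c),
                (∏ k : Fin m, w (u' (c k.castSucc)) (u' (c k.succ))) *
                  w (u' (c (Fin.last m))) (n + 1) *
                  (∑ j ∈ (Finset.Icc 1 (u' (c 0) - 1)).filter
                      (fun j => ∀ k, k < c 0 → u' k ≠ j),
                    w j (u' (c 0))) := by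
        rw [Finset.sum_congr rfl (fun m (_ : m ∈ Finset.range (L + 1)) => partA m)]
        rw [Finset.sum_range_succ, hempty, Finset.sum_empty, add_zero]
      -- sum over chains ending at last, assembled
      have hEq : (∑ m ∈ Finset.range (L + 1),
          ∑ c ∈ Finset.univ.filter
              (fun c : Fin (m + 1) → Fin (L + 1) => StrictMono c ∧ c (Fin.last m) = Fin.last L),
            (∏ k : Fin m, w (u (c k.castSucc)) (u (c k.succ))) *
              w (u (c (Fin.last m))) (n + 1) *
              (∑ j ∈ (Finset.Icc 1 (u (c 0) - 1)).filter (fun j => ∀ k, k < c 0 → u k ≠ j),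
                w j (u (c 0))))
          = w U (n + 1) *
              ((∑ i ∈ (Finset.Icc 1 (U - 1)).filter (fun i => ∀ k : Fin L, u' k ≠ i),
                  w i (U - 1 + 1))
               + ∑ m ∈ Finset.range L,
                  ∑ c ∈ Finset.univ.filter (fun c : Fin (m + 1) → Fin L => StrictMono c),
                    (∏ k : Fin m, w (u' (c k.castSucc)) (u' (c k.succ))) *
                      w (u' (c (Fin.last m))) (U - 1 + 1) *
                      (∑ j ∈ (Finset.Icc 1 (u' (c 0) - 1)).filter
                          (fun j => ∀ k, k < c 0 → u' k ≠ j),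
                        w j (u' (c 0)))) := by
        rw [Finset.sum_range_succ']
        show (∑ m ∈ Finset.range L,
            ∑ c ∈ Finset.univ.filter
                (fun c : Fin (m + 2) → Fin (L + 1) =>
                  StrictMono c ∧ c (Fin.last (m + 1)) = Fin.last L),
              (∏ k : Fin (m + 1), w (u (c k.castSucc)) (u (c k.succ))) *
                w (u (c (Fin.last (m + 1)))) (n + 1) *
                (∑ j ∈ (Finset.Icc 1 (u (c 0) - 1)).filter (fun j => ∀ k, k < c 0 → u k ≠ j),
                  w j (u (c 0))))
            + (∑ c ∈ Finset.univ.filter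
                (fun c : Fin 1 → Fin (L + 1) => StrictMono c ∧ c (Fin.last 0) = Fin.last L),
              (∏ k : Fin 0, w (u (c k.castSucc)) (u (c k.succ))) *
                w (u (c (Fin.last 0))) (n + 1) *
                (∑ j ∈ (Finset.Icc 1 (u (c 0) - 1)).filter (fun j => ∀ k, k < c 0 → u k ≠ j),
                  w j (u (c 0))))
            = _
        rw [Finset.sum_congr rfl (fun m (_ : m ∈ Finset.range L) => partB m), partB0,
          ← Finset.mul_sum]
        ring
      rw [hdir, Finset.sum_congr rfl (fun m (_ : m ∈ Finset.range (L + 1)) => hsplit m),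
        Finset.sum_add_distrib, hNe, hEq, IH2]
      linarith [IH1]
end

section
/- Stochastic inconsistency of the renormalized partial model (Remark 1): there exist points s₁, s₂ ∈ ℝ², weights, and bandwidth h̲ such that, with the renormalized model f̃ that drops the missing point u₁ = 2 from the kernel sum and renormalizes the weights (n = 2 with s₂ missing), f̃_Θ(s₃ | s₁) ≠ ∫ f̃_Θ(s₃ | s₁, s₂)·f̃_Θ(s₂ | s₁) ds₂, i.e., the Chapman–Kolmogorov consistency equation fails. -/
open MeasureTheory Real

lemma gauss1_one_sq (x : ℝ) : gauss1 1 x ^ 2 = (1 / (2 * π)) * Real.exp (-1 * x ^ 2) := by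
  have h2π : (0:ℝ) < 2 * π := by positivity
  rw [gauss1]
  rw [mul_pow, ← Real.exp_nat_mul]
  rw [div_pow, one_pow, mul_one, Real.sq_sqrt h2π.le]
  ring_nf

lemma integral_gauss1_sq : ∫ x : ℝ, gauss1 1 x ^ 2 = 1 / (2 * Real.sqrt π) := by
  simp_rw [gauss1_one_sq]
  rw [integral_const_mul, integral_gaussian, div_one]
  have hπ : (0:ℝ) < π := Real.pi_pos
  rw [div_mul_eq_mul_div, one_mul]
  rw [div_eq_div_iff (by positivity) (by positivity)]
  have : Real.sqrt π * Real.sqrt π = π := Real.mul_self_sqrt hπ.le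
  nlinarith [this]

/-- Stochastic inconsistency of the renormalized partial model (Remark 1): there exist
points `s₁, s₃ ∈ ℝ²`, nonnegative weights `w₁₃, w₂₃` summing to 1, and a positive bandwidth
`h̲ = (h₁, h₂)` such that, with `n = 2` and `s₂` missing (`u₁ = 2`), the renormalized model
`f̃_Θ(s₃ | s₁) = κ₂(s₃ − s₁, h̲)` differs from
`∫ f̃_Θ(s₃ | s₁, s₂)·f̃_Θ(s₂ | s₁) ds₂`, i.e. Chapman–Kolmogorov consistency fails. -/
theorem partial_model_inconsistent :
    ∃ (s₁ s₃ : ℝ × ℝ) (w₁₃ w₂₃ h₁ h₂ : ℝ),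
      0 < h₁ ∧ 0 < h₂ ∧ 0 ≤ w₁₃ ∧ 0 ≤ w₂₃ ∧ w₁₃ + w₂₃ = 1 ∧
        kernel2 (s₃ - s₁) (h₁, h₂) ≠
          ∫ z : ℝ × ℝ,
            (w₁₃ * kernel2 (s₃ - s₁) (h₁, h₂) + w₂₃ * kernel2 (s₃ - z) (h₁, h₂)) *
              kernel2 (z - s₁) (h₁, h₂) := by
  refine ⟨(0,0), (0,0), 0, 1, 1, 1, one_pos, one_pos, le_refl 0, zero_le_one, by ring, ?_⟩
  have hπ : (0:ℝ) < π := Real.pi_pos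
  have hint : (∫ z : ℝ × ℝ,
      (0 * kernel2 ((0,0) - (0,0)) (1,1) + 1 * kernel2 ((0,0) - z) (1,1)) *
        kernel2 (z - (0,0)) (1,1)) = 1 / (4 * π) := by
    have h1 : ∀ z : ℝ × ℝ,
        (0 * kernel2 ((0,0) - (0,0)) (1,1) + 1 * kernel2 ((0,0) - z) (1,1)) *
          kernel2 (z - (0,0)) (1,1) = (gauss1 1 z.1 ^ 2) * (gauss1 1 z.2 ^ 2) := by
      intro z
      simp only [kernel2, gauss1, Prod.fst_sub, Prod.snd_sub, Prod.fst_zero, Prod.snd_zero]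
      ring_nf
    simp_rw [h1]
    rw [Measure.volume_eq_prod ℝ ℝ,
      integral_prod_mul (fun x : ℝ => gauss1 1 x ^ 2) (fun x : ℝ => gauss1 1 x ^ 2),
      integral_gauss1_sq]
    rw [div_mul_div_comm, one_mul]
    congr 1
    have : Real.sqrt π * Real.sqrt π = π := Real.mul_self_sqrt hπ.le
    nlinarith [this]
  rw [hint]
  have h0 : kernel2 ((0,0) - (0,0) : ℝ × ℝ) (1,1) = 1 / (2 * π) := by
    have := gauss1_one_sq 0
    simp only [kernel2, Prod.fst_sub, Prod.snd_sub, Prod.fst_zero, Prod.snd_zero, sub_zero]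
    nlinarith [this, Real.exp_zero]
  rw [h0]
  intro h
  rw [div_eq_div_iff (by positivity) (by positivity)] at h
  nlinarith
end
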